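/- arXiv:2309.06569 — 3 statements merged into one kernel-verified Lean document; each statement's English description precedes it below -/
import Mathlib

section
/- For fixed σ > 0 and a closed interval [a,b] with midpoint c = (a+b)/2, the function μ ↦ h([a,b], μ, σ) is monotone nonincreasing in |μ - c|; that is, if |μ₁ - c| ≤ |μ₂ - c| then h([a,b], μ₂, σ) ≤ h([a,b], μ₁, σ). -/
open MeasureTheory ProbabilityTheory Real Set

noncomputable def erf (x : ℝ) : ℝ := (2 / Real.sqrt Real.pi) * ∫ t in (0:ℝ)..x, Real.exp (-t^2)

noncomputable def h (a b μ σ : ℝ) : ℝ :=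
  (1/2) * (erf ((b - μ) / Real.sqrt (2*σ)) - erf ((a - μ) / Real.sqrt (2*σ)))

noncomputable def G (L m : ℝ) : ℝ := ∫ t in (m-L)..(m+L), Real.exp (-t^2)

lemma cont_gauss : Continuous (fun t : ℝ => Real.exp (-t^2)) := by continuity

lemma intble (u v : ℝ) : IntervalIntegrable (fun t : ℝ => Real.exp (-t^2)) volume u v :=
  cont_gauss.intervalIntegrable u v

lemma G_neg (L m : ℝ) : G L (-m) = G L m := by
  unfold G
  rw [show -m - L = -(m+L) by ring, show -m + L = -(m-L) by ring,
    ← intervalIntegral.integral_comp_neg (fun t => Real.exp (-t^2))]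
  congr 1; funext x; ring_nf

lemma G_abs (L m : ℝ) : G L m = G L |m| := by
  rcases abs_cases m with ⟨h1, _⟩ | ⟨h1, _⟩
  · rw [h1]
  · rw [h1, G_neg]

lemma G_anti (L : ℝ) (hL : 0 ≤ L) (m₁ m₂ : ℝ) (h1 : 0 ≤ m₁) (h12 : m₁ ≤ m₂) :
    G L m₂ ≤ G L m₁ := by
  unfold G
  have e1 : (∫ t in (m₁-L)..(m₁+L), Real.exp (-t^2)) + ∫ t in (m₁+L)..(m₂+L), Real.exp (-t^2)
      = ∫ t in (m₁-L)..(m₂+L), Real.exp (-t^2) :=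
    intervalIntegral.integral_add_adjacent_intervals (intble _ _) (intble _ _)
  have e2 : (∫ t in (m₁-L)..(m₂-L), Real.exp (-t^2)) + ∫ t in (m₂-L)..(m₂+L), Real.exp (-t^2)
      = ∫ t in (m₁-L)..(m₂+L), Real.exp (-t^2) :=
    intervalIntegral.integral_add_adjacent_intervals (intble _ _) (intble _ _)
  have shift : (∫ t in (m₁-L)..(m₂-L), Real.exp (-(t+2*L)^2))
      = ∫ t in (m₁+L)..(m₂+L), Real.exp (-t^2) := by
    rw [intervalIntegral.integral_comp_add_right (fun t => Real.exp (-t^2)) (2*L)]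
    congr 1 <;> ring
  have mono : (∫ t in (m₁-L)..(m₂-L), Real.exp (-(t+2*L)^2))
      ≤ ∫ t in (m₁-L)..(m₂-L), Real.exp (-t^2) := by
    apply intervalIntegral.integral_mono_on (by linarith)
      ((cont_gauss.comp (by continuity)).intervalIntegrable _ _) (intble _ _)
    intro x hx
    have hx1 : m₁ - L ≤ x := hx.1
    show Real.exp (-(x + 2*L)^2) ≤ Real.exp (-x^2)
    exact Real.exp_le_exp.mpr (by nlinarith)
  linarith

lemma h_eq (a b μ σ : ℝ) :
    h a b μ σ = (1 / Real.sqrt Real.pi) *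
      ∫ t in ((a-μ)/Real.sqrt (2*σ))..((b-μ)/Real.sqrt (2*σ)), Real.exp (-t^2) := by
  unfold h erf
  set A := (a-μ)/Real.sqrt (2*σ)
  set B := (b-μ)/Real.sqrt (2*σ)
  have key : (∫ t in A..B, Real.exp (-t^2))
      = (∫ t in (0:ℝ)..B, Real.exp (-t^2)) - ∫ t in (0:ℝ)..A, Real.exp (-t^2) := by
    have := intervalIntegral.integral_add_adjacent_intervals (intble 0 A) (intble A B)
    linarith
  rw [key]; ring

theorem stmt2 (a b σ : ℝ) (hσ : 0 < σ) (hab : a ≤ b) (c : ℝ) (hc : c = (a + b) / 2)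
    (μ₁ μ₂ : ℝ) (hd : |μ₁ - c| ≤ |μ₂ - c|) : h a b μ₂ σ ≤ h a b μ₁ σ := by
  have hs : 0 < Real.sqrt (2*σ) := Real.sqrt_pos.mpr (by linarith)
  set s := Real.sqrt (2*σ) with hsdef
  have hL : 0 ≤ (b-a)/(2*s) := div_nonneg (by linarith) (by linarith)
  have e : ∀ μ : ℝ, h a b μ σ = (1/Real.sqrt Real.pi) * G ((b-a)/(2*s)) ((c-μ)/s) := by
    intro μ
    rw [h_eq]
    unfold G
    have eA : (a-μ)/s = (c-μ)/s - (b-a)/(2*s) := by rw [hc]; field_simp; ring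
    have eB : (b-μ)/s = (c-μ)/s + (b-a)/(2*s) := by rw [hc]; field_simp; ring
    rw [eA, eB]
  rw [e μ₁, e μ₂]
  apply mul_le_mul_of_nonneg_left _ (by positivity)
  rw [G_abs _ ((c-μ₂)/s), G_abs _ ((c-μ₁)/s)]
  apply G_anti _ hL _ _ (abs_nonneg _)
  rw [abs_div, abs_div, abs_of_pos hs]
  rw [abs_sub_comm c μ₁, abs_sub_comm c μ₂]
  gcongr
end

section
/- For fixed μ ∈ ℝ, a closed interval [a,b] with a ≤ b, and 0 < σ₁ ≤ σ₂, it holds that h([a,b], μ, σ) ≥ min(h([a,b], μ, σ₁), h([a,b], μ, σ₂)) for all σ ∈ [σ₁, σ₂]; i.e., the minimum over a variance interval of the Gaussian mass of a fixed interval is attained at an endpoint of the variance interval. -/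
open MeasureTheory ProbabilityTheory Real Set

lemma erf_hasDerivAt (x : ℝ) :
    HasDerivAt erf (2 / Real.sqrt Real.pi * Real.exp (-x^2)) x := by
  have hc : Continuous fun t : ℝ => Real.exp (-t^2) := by continuity
  have h1 : HasDerivAt (fun u : ℝ => ∫ t in (0:ℝ)..u, Real.exp (-t^2)) (Real.exp (-x^2)) x :=
    intervalIntegral.integral_hasDerivAt_right (hc.intervalIntegrable 0 x)
      (hc.aestronglyMeasurable.stronglyMeasurableAtFilter) hc.continuousAt
  have h2 := h1.const_mul (2 / Real.sqrt Real.pi)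
  exact h2

lemma inner_hasDerivAt (c σ : ℝ) (hσ : 0 < σ) :
    HasDerivAt (fun s : ℝ => c / Real.sqrt (2*s)) (-c / (2*σ*Real.sqrt (2*σ))) σ := by
  have h2σ : (0:ℝ) < 2*σ := by linarith
  have hs : Real.sqrt (2*σ) ≠ 0 := ne_of_gt (Real.sqrt_pos.mpr h2σ)
  have h1 : HasDerivAt (fun s : ℝ => (2:ℝ)*s) 2 σ := by
    simpa using (hasDerivAt_id σ).const_mul (2:ℝ)
  have h2 : HasDerivAt (fun s : ℝ => Real.sqrt (2*s)) (1 / (2*Real.sqrt (2*σ)) * 2) σ :=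
    (Real.hasDerivAt_sqrt (ne_of_gt h2σ)).comp σ h1
  have h3 := (hasDerivAt_const σ c).div h2 hs
  refine h3.congr_deriv ?_
  rw [Real.sq_sqrt h2σ.le]
  field_simp
  ring

lemma h_hasDerivAt (a b μ σ : ℝ) (hσ : 0 < σ) :
    HasDerivAt (fun s => h a b μ s)
      (((a-μ) * Real.exp (-(a-μ)^2/(2*σ)) - (b-μ) * Real.exp (-(b-μ)^2/(2*σ))) /
        (Real.sqrt Real.pi * (2*σ) * Real.sqrt (2*σ))) σ := by
  have h2σ : (0:ℝ) < 2*σ := by linarith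
  have hs : Real.sqrt (2*σ) ≠ 0 := ne_of_gt (Real.sqrt_pos.mpr h2σ)
  have hπ : Real.sqrt Real.pi ≠ 0 := ne_of_gt (Real.sqrt_pos.mpr Real.pi_pos)
  have key : ∀ c : ℝ, HasDerivAt (fun s => erf (c / Real.sqrt (2*s)))
      (2 / Real.sqrt Real.pi * Real.exp (-(c^2/(2*σ))) * (-c / (2*σ*Real.sqrt (2*σ)))) σ := by
    intro c
    have H := (erf_hasDerivAt (c / Real.sqrt (2*σ))).comp σ (inner_hasDerivAt c σ hσ)
    have hsq : (c / Real.sqrt (2*σ))^2 = c^2/(2*σ) := by rw [div_pow, Real.sq_sqrt h2σ.le]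
    rw [hsq] at H
    exact H
  have H := ((key (b-μ)).sub (key (a-μ))).const_mul (1/2 : ℝ)
  have heq : (fun s => (1:ℝ)/2 * (erf ((b - μ) / Real.sqrt (2*s)) - erf ((a - μ) / Real.sqrt (2*s))))
      = fun s => h a b μ s := rfl
  rw [← heq]
  refine H.congr_deriv ?_
  field_simp
  ring

lemma psi_pos_case (A B x y : ℝ) (hA : 0 < A) (hAB : A ≤ B) (hx : 0 < x) (hxy : x ≤ y)
    (hy : 0 ≤ A * Real.exp (-A^2/(2*y)) - B * Real.exp (-B^2/(2*y))) :
    0 ≤ A * Real.exp (-A^2/(2*x)) - B * Real.exp (-B^2/(2*x)):= by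
  have hB : 0 < B := lt_of_lt_of_le hA hAB
  have hy0 : 0 < y := lt_of_lt_of_le hx hxy
  have hy' : B * Real.exp (-B^2/(2*y)) ≤ A * Real.exp (-A^2/(2*y)) := by linarith
  have step1 : B ≤ A * Real.exp ((B^2-A^2)/(2*y)) := by
    have := mul_le_mul_of_nonneg_right hy' (Real.exp_pos (B^2/(2*y))).le
    rw [mul_assoc, mul_assoc, ← Real.exp_add, ← Real.exp_add] at this
    have e1 : -B^2/(2*y) + B^2/(2*y) = 0 := by ring
    have e2 : -A^2/(2*y) + B^2/(2*y) = (B^2-A^2)/(2*y) := by ring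
    rw [e1, e2, Real.exp_zero, mul_one] at this
    exact this
  have step2 : Real.exp ((B^2-A^2)/(2*y)) ≤ Real.exp ((B^2-A^2)/(2*x)) := by
    apply Real.exp_le_exp.mpr
    apply div_le_div_of_nonneg_left (by nlinarith) (by linarith) (by linarith)
  have step3 : B ≤ A * Real.exp ((B^2-A^2)/(2*x)) :=
    le_trans step1 (mul_le_mul_of_nonneg_left step2 hA.le)
  have := mul_le_mul_of_nonneg_right step3 (Real.exp_pos (-B^2/(2*x))).le
  rw [mul_assoc, ← Real.exp_add] at this
  have e3 : (B^2-A^2)/(2*x) + -B^2/(2*x) = -A^2/(2*x) := by ring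
  rw [e3] at this
  linarith

lemma psi_sc (A B x y : ℝ) (hAB : A ≤ B) (hx : 0 < x) (hxy : x ≤ y)
    (hy : 0 ≤ A * Real.exp (-A^2/(2*y)) - B * Real.exp (-B^2/(2*y))) :
    0 ≤ A * Real.exp (-A^2/(2*x)) - B * Real.exp (-B^2/(2*x)) := by
  rcases lt_or_ge 0 A with hA | hA
  · exact psi_pos_case A B x y hA hAB hx hxy hy
  rcases lt_or_ge B 0 with hB | hB
  · have h' : 0 ≤ (-B) * Real.exp (-(-B)^2/(2*y)) - (-A) * Real.exp (-(-A)^2/(2*y)) := by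
      simp only [neg_sq]; linarith
    have h'' := psi_pos_case (-B) (-A) x y (by linarith) (by linarith) hx hxy h'
    simp only [neg_sq] at h''
    linarith
  · have eA : A * Real.exp (-A^2/(2*y)) ≤ 0 :=
      mul_nonpos_of_nonpos_of_nonneg hA (Real.exp_pos _).le
    have eB : 0 ≤ B * Real.exp (-B^2/(2*y)) := mul_nonneg hB (Real.exp_pos _).le
    have h1 : A * Real.exp (-A^2/(2*y)) = 0 := le_antisymm eA (by linarith)
    have h2 : B * Real.exp (-B^2/(2*y)) = 0 := le_antisymm (by linarith) eB
    have hA0 : A = 0 := by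
      rcases mul_eq_zero.mp h1 with h | h
      · exact h
      · exact absurd h (Real.exp_ne_zero _)
    have hB0 : B = 0 := by
      rcases mul_eq_zero.mp h2 with h | h
      · exact h
      · exact absurd h (Real.exp_ne_zero _)
    simp [hA0, hB0]

lemma min_le_of_single_crossing (f f' : ℝ → ℝ) (σ₁ σ₂ σ : ℝ)
    (hσ : σ ∈ Set.Icc σ₁ σ₂)
    (hd : ∀ x ∈ Set.Icc σ₁ σ₂, HasDerivAt f (f' x) x)
    (hsc : ∀ x ∈ Set.Icc σ₁ σ₂, ∀ y ∈ Set.Icc σ₁ σ₂, x ≤ y → 0 ≤ f' y → 0 ≤ f' x) :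
    min (f σ₁) (f σ₂) ≤ f σ := by
  obtain ⟨hσ1, hσ2⟩ := hσ
  by_cases hcase : ∀ x ∈ Set.Icc σ₁ σ, 0 ≤ f' x
  · have hsub : Set.Icc σ₁ σ ⊆ Set.Icc σ₁ σ₂ := Set.Icc_subset_Icc le_rfl hσ2
    have hmono : MonotoneOn f (Set.Icc σ₁ σ) := by
      apply monotoneOn_of_deriv_nonneg (convex_Icc _ _)
      · intro x hx; exact (hd x (hsub hx)).continuousAt.continuousWithinAt
      · intro x hx
        exact (hd x (hsub (interior_subset hx))).differentiableAt.differentiableWithinAt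
      · intro x hx
        rw [(hd x (hsub (interior_subset hx))).deriv]
        exact hcase x (interior_subset hx)
    exact le_trans (min_le_left _ _)
      (hmono (Set.left_mem_Icc.mpr hσ1) (Set.right_mem_Icc.mpr hσ1) hσ1)
  · push_neg at hcase
    obtain ⟨x₀, hx₀, hx₀'⟩ := hcase
    have hx₀m : x₀ ∈ Set.Icc σ₁ σ₂ := ⟨hx₀.1, le_trans hx₀.2 hσ2⟩
    have hnp : ∀ y ∈ Set.Icc σ σ₂, f' y ≤ 0 := by
      intro y hy
      by_contra hpos
      push_neg at hpos
      exact absurd (hsc x₀ hx₀m y ⟨le_trans hσ1 hy.1, hy.2⟩ (le_trans hx₀.2 hy.1) hpos.le)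
        (not_le.mpr hx₀')
    have hsub : Set.Icc σ σ₂ ⊆ Set.Icc σ₁ σ₂ := Set.Icc_subset_Icc hσ1 le_rfl
    have hanti : AntitoneOn f (Set.Icc σ σ₂) := by
      apply antitoneOn_of_deriv_nonpos (convex_Icc _ _)
      · intro x hx; exact (hd x (hsub hx)).continuousAt.continuousWithinAt
      · intro x hx
        exact (hd x (hsub (interior_subset hx))).differentiableAt.differentiableWithinAt
      · intro x hx
        rw [(hd x (hsub (interior_subset hx))).deriv]
        exact hnp x (interior_subset hx)
    exact le_trans (min_le_right _ _)
      (hanti (Set.left_mem_Icc.mpr hσ2) (Set.right_mem_Icc.mpr hσ2) hσ2)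

theorem stmt4 (a b μ σ₁ σ₂ σ : ℝ) (hab : a ≤ b) (h1 : 0 < σ₁) (h12 : σ₁ ≤ σ₂)
    (hσ : σ ∈ Set.Icc σ₁ σ₂) : min (h a b μ σ₁) (h a b μ σ₂) ≤ h a b μ σ := by
  have hden : ∀ s : ℝ, 0 < s → 0 < Real.sqrt Real.pi * (2*s) * Real.sqrt (2*s) := by
    intro s hs
    exact mul_pos (mul_pos (Real.sqrt_pos.mpr Real.pi_pos) (by linarith))
      (Real.sqrt_pos.mpr (by linarith))
  exact min_le_of_single_crossing (fun s => h a b μ s)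
    (fun s => ((a-μ) * Real.exp (-(a-μ)^2/(2*s)) - (b-μ) * Real.exp (-(b-μ)^2/(2*s))) /
      (Real.sqrt Real.pi * (2*s) * Real.sqrt (2*s))) σ₁ σ₂ σ hσ
    (fun x hx => h_hasDerivAt a b μ x (lt_of_lt_of_le h1 hx.1))
    (by
      intro x hx y hy hxy hfy
      have hx0 : 0 < x := lt_of_lt_of_le h1 hx.1
      have hy0 : 0 < y := lt_of_lt_of_le h1 hy.1
      have hψy : 0 ≤ (a-μ) * Real.exp (-(a-μ)^2/(2*y)) - (b-μ) * Real.exp (-(b-μ)^2/(2*y)) := by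
        rwa [le_div_iff₀ (hden y hy0), zero_mul] at hfy
      exact div_nonneg (psi_sc (a-μ) (b-μ) x y (by linarith) hx0 hxy hψy) (hden x hx0).le)
end

section
/- (Theorem 1, lower bound, 1-D case) Let μ range over a closed interval [m₁,m₂] and σ over {σ₁, σ₂} ⊆ (0,∞) with σ₁ ≤ σ₂. Let [a,b] be a closed interval with midpoint c and let z̄ be the point of [m₁,m₂] farthest from c. Then for all μ ∈ [m₁,m₂] and all σ ∈ [σ₁,σ₂], h([a,b], μ, σ) ≥ min(h([a,b], z̄, σ₁), h([a,b], z̄, σ₂)). -/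
open MeasureTheory ProbabilityTheory Real Set

lemma erf_neg (x : ℝ) : erf (-x) = - erf x := by
  have h1 := intervalIntegral.integral_comp_neg (a := (0:ℝ)) (b := x)
    (f := fun t => Real.exp (-t^2))
  simp only [neg_neg, neg_zero, neg_sq] at h1
  have h2 : (∫ t in (-x)..(0:ℝ), Real.exp (-t^2)) = - ∫ t in (0:ℝ)..(-x), Real.exp (-t^2) :=
    intervalIntegral.integral_symm 0 (-x)
  have key : (∫ t in (0:ℝ)..(-x), Real.exp (-t^2)) = - ∫ t in (0:ℝ)..x, Real.exp (-t^2) := by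
    rw [← h1] at h2; linarith
  rw [erf, erf, key]
  ring

/-- monotonicity helpers -/
lemma le_of_hasDerivAt_nonpos {f f' : ℝ → ℝ} {x y : ℝ}
    (hf : ∀ t ∈ Icc x y, HasDerivAt f (f' t) t)
    (hxy : x ≤ y) (hsign : ∀ t ∈ Icc x y, f' t ≤ 0) : f y ≤ f x := by
  have H := antitoneOn_of_deriv_nonpos (convex_Icc x y)
    (fun t ht => (hf t ht).continuousAt.continuousWithinAt)
    (fun t ht => (hf t (Ioo_subset_Icc_self (by rwa [interior_Icc] at ht))).differentiableAt.differentiableWithinAt)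
    (fun t ht => by
      have ht' := Ioo_subset_Icc_self (by rwa [interior_Icc] at ht : t ∈ Ioo x y)
      rw [(hf t ht').deriv]
      exact hsign t ht')
  exact H (left_mem_Icc.2 hxy) (right_mem_Icc.2 hxy) hxy

lemma le_of_hasDerivAt_nonneg {f f' : ℝ → ℝ} {x y : ℝ}
    (hf : ∀ t ∈ Icc x y, HasDerivAt f (f' t) t)
    (hxy : x ≤ y) (hsign : ∀ t ∈ Icc x y, 0 ≤ f' t) : f x ≤ f y := by
  have H := monotoneOn_of_deriv_nonneg (convex_Icc x y)
    (fun t ht => (hf t ht).continuousAt.continuousWithinAt)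
    (fun t ht => (hf t (Ioo_subset_Icc_self (by rwa [interior_Icc] at ht))).differentiableAt.differentiableWithinAt)
    (fun t ht => by
      have ht' := Ioo_subset_Icc_self (by rwa [interior_Icc] at ht : t ∈ Ioo x y)
      rw [(hf t ht').deriv]
      exact hsign t ht')
  exact H (left_mem_Icc.2 hxy) (right_mem_Icc.2 hxy) hxy

lemma h_symm (a b c σ : ℝ) (hc : c = (a+b)/2) (μ : ℝ) :
    h a b (2*c - μ) σ = h a b μ σ := by
  have h1 : b - (2*c - μ) = -(a - μ) := by rw [hc]; ring
  have h2 : a - (2*c - μ) = -(b - μ) := by rw [hc]; ring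
  simp only [h, h1, h2, neg_div, erf_neg]
  ring

lemma h_hasDerivAt_mu (a b σ : ℝ) (μ : ℝ) :
    HasDerivAt (fun t => h a b t σ)
      (1 / Real.sqrt Real.pi * (1 / Real.sqrt (2*σ)) *
        (Real.exp (-((a-μ)/Real.sqrt (2*σ))^2) - Real.exp (-((b-μ)/Real.sqrt (2*σ))^2))) μ := by
  set s := Real.sqrt (2*σ) with hs
  have hb : HasDerivAt (fun t : ℝ => (b - t)/s) (-1/s) μ := by
    simpa using ((hasDerivAt_id μ).const_sub b).div_const s
  have ha : HasDerivAt (fun t : ℝ => (a - t)/s) (-1/s) μ := by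
    simpa using ((hasDerivAt_id μ).const_sub a).div_const s
  have Hb := (erf_hasDerivAt ((b-μ)/s)).comp μ hb
  have Ha := (erf_hasDerivAt ((a-μ)/s)).comp μ ha
  have := (Hb.sub Ha).const_mul (1/2 : ℝ)
  refine this.congr_deriv ?_
  · ring

lemma h_hasDerivAt_sigma (a b μ : ℝ) {σ : ℝ} (hσ : 0 < σ) :
    HasDerivAt (fun σ => h a b μ σ)
      (1 / (Real.sqrt Real.pi * (2*σ) * Real.sqrt (2*σ)) *
        ((a-μ) * Real.exp (-((a-μ)^2) * (1/(2*σ)))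
         - (b-μ) * Real.exp (-((b-μ)^2) * (1/(2*σ))))) σ := by
  have h2σ : (0:ℝ) < 2*σ := by linarith
  have hs : 0 < Real.sqrt (2*σ) := Real.sqrt_pos.2 h2σ
  have hπ : 0 < Real.sqrt Real.pi := Real.sqrt_pos.2 Real.pi_pos
  have hlin : HasDerivAt (fun σ : ℝ => 2*σ) 2 σ := by
    simpa using (hasDerivAt_id σ).const_mul 2
  have hsq : HasDerivAt (fun σ : ℝ => Real.sqrt (2*σ)) (2 / (2*Real.sqrt (2*σ))) σ :=
    hlin.sqrt h2σ.ne'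
  have hB : HasDerivAt (fun σ : ℝ => (b-μ) / Real.sqrt (2*σ))
      ((b-μ) * (-(2 / (2*Real.sqrt (2*σ))) / (Real.sqrt (2*σ))^2)) σ := by
    simpa [div_eq_mul_inv] using (hsq.inv hs.ne').const_mul (b-μ)
  have hA : HasDerivAt (fun σ : ℝ => (a-μ) / Real.sqrt (2*σ))
      ((a-μ) * (-(2 / (2*Real.sqrt (2*σ))) / (Real.sqrt (2*σ))^2)) σ := by
    simpa [div_eq_mul_inv] using (hsq.inv hs.ne').const_mul (a-μ)
  have HB := (erf_hasDerivAt ((b-μ)/Real.sqrt (2*σ))).comp σ hB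
  have HA := (erf_hasDerivAt ((a-μ)/Real.sqrt (2*σ))).comp σ hA
  have Hfin := (HB.sub HA).const_mul (1/2 : ℝ)
  refine Hfin.congr_deriv ?_
  have hss : Real.sqrt (2*σ) ^ 2 = 2*σ := Real.sq_sqrt h2σ.le
  have hexp : ∀ X : ℝ, -((X / Real.sqrt (2*σ))^2) = -(X^2) * (1/(2*σ)) := by
    intro X
    rw [div_pow, hss]
    ring
  rw [hexp (a-μ), hexp (b-μ)]
  set s := Real.sqrt (2*σ) with hsdef
  rw [← hss]
  field_simp
  ring

lemma single_cross {A B u u' : ℝ} (hAB : A ≤ B) (hu' : 0 ≤ u') (huu : u' ≤ u)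
    (h0 : A * Real.exp (-(A^2)*u) ≤ B * Real.exp (-(B^2)*u)) :
    A * Real.exp (-(A^2)*u') ≤ B * Real.exp (-(B^2)*u') := by
  have e1 : A * Real.exp (-(A^2)*u') = A * Real.exp (-(A^2)*u) * Real.exp (A^2*(u-u')) := by
    rw [mul_assoc, ← Real.exp_add, show (-(A^2)*u + A^2*(u-u')) = -(A^2)*u' by ring]
  have e2 : B * Real.exp (-(B^2)*u') = B * Real.exp (-(B^2)*u) * Real.exp (B^2*(u-u')) := by
    rw [mul_assoc, ← Real.exp_add, show (-(B^2)*u + B^2*(u-u')) = -(B^2)*u' by ring]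
  rcases le_or_gt A 0 with hA | hA
  · rcases le_or_gt 0 B with hB | hB
    · have l1 : A * Real.exp (-(A^2)*u') ≤ 0 :=
        mul_nonpos_of_nonpos_of_nonneg hA (Real.exp_nonneg _)
      have l2 : 0 ≤ B * Real.exp (-(B^2)*u') :=
        mul_nonneg hB (Real.exp_nonneg _)
      linarith
    · -- A ≤ B < 0
      have hBA : B^2 ≤ A^2 := by nlinarith
      rw [e1, e2]
      have step1 : A * Real.exp (-(A^2)*u) * Real.exp (A^2*(u-u'))
          ≤ B * Real.exp (-(B^2)*u) * Real.exp (A^2*(u-u')) :=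
        mul_le_mul_of_nonneg_right h0 (Real.exp_nonneg _)
      have hBneg : B * Real.exp (-(B^2)*u) ≤ 0 :=
        mul_nonpos_of_nonpos_of_nonneg hB.le (Real.exp_nonneg _)
      have step2 : B * Real.exp (-(B^2)*u) * Real.exp (A^2*(u-u'))
          ≤ B * Real.exp (-(B^2)*u) * Real.exp (B^2*(u-u')) := by
        apply mul_le_mul_of_nonpos_left _ hBneg
        exact Real.exp_le_exp.2 (by nlinarith)
      linarith
  · -- 0 < A ≤ B
    have hAB2 : A^2 ≤ B^2 := by nlinarith
    rw [e1, e2]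
    have hApos : 0 ≤ A * Real.exp (-(A^2)*u) :=
      mul_nonneg hA.le (Real.exp_nonneg _)
    have step1 : A * Real.exp (-(A^2)*u) * Real.exp (A^2*(u-u'))
        ≤ A * Real.exp (-(A^2)*u) * Real.exp (B^2*(u-u')) := by
      apply mul_le_mul_of_nonneg_left _ hApos
      exact Real.exp_le_exp.2 (by nlinarith)
    have step2 : A * Real.exp (-(A^2)*u) * Real.exp (B^2*(u-u'))
        ≤ B * Real.exp (-(B^2)*u) * Real.exp (B^2*(u-u')) :=
      mul_le_mul_of_nonneg_right h0 (Real.exp_nonneg _)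
    linarith

lemma h_le_of_dist_le (a b c σ : ℝ) (hab : a ≤ b) (hc : c = (a+b)/2) (hσ : 0 < σ)
    {z μ : ℝ} (hd : |μ - c| ≤ |z - c|) : h a b z σ ≤ h a b μ σ := by
  have hs : 0 < Real.sqrt (2*σ) := Real.sqrt_pos.2 (by linarith)
  have hπ : 0 < Real.sqrt Real.pi := Real.sqrt_pos.2 Real.pi_pos
  have hrepr : ∀ w : ℝ, h a b w σ = h a b (c + |w - c|) σ := by
    intro w
    rcases abs_cases (w - c) with ⟨he, _⟩ | ⟨he, _⟩
    · rw [he]; ring_nf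
    · rw [he, show c + -(w - c) = 2*c - w by ring, h_symm a b c σ hc]
  rw [hrepr z, hrepr μ]
  have hxy : c + |μ - c| ≤ c + |z - c| := by linarith
  apply le_of_hasDerivAt_nonpos (fun t _ => h_hasDerivAt_mu a b σ t) hxy
  intro t ht
  have htc : c ≤ t := le_trans (by linarith [abs_nonneg (μ - c)]) ht.1
  have hsq : ((b - t)/Real.sqrt (2*σ))^2 ≤ ((a - t)/Real.sqrt (2*σ))^2 := by
    rw [div_pow, div_pow]
    apply div_le_div_of_nonneg_right _ (by positivity)
    nlinarith
  have hle : Real.exp (-((a - t)/Real.sqrt (2*σ))^2) ≤ Real.exp (-((b - t)/Real.sqrt (2*σ))^2) :=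
    Real.exp_le_exp.2 (by linarith)
  apply mul_nonpos_of_nonneg_of_nonpos (by positivity)
  linarith

lemma dist_le_zbar (m₁ m₂ c zbar : ℝ)
    (hz : zbar = if |m₂ - c| ≤ |m₁ - c| then m₁ else m₂)
    {μ : ℝ} (hμ : μ ∈ Icc m₁ m₂) : |μ - c| ≤ |zbar - c| := by
  have key : |μ - c| ≤ max |m₁ - c| |m₂ - c| := by
    rcases abs_cases (μ - c) with ⟨he, _⟩ | ⟨he, _⟩
    · rw [he]
      exact le_trans (by linarith [hμ.2, le_abs_self (m₂ - c)] : μ - c ≤ |m₂ - c|)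
        (le_max_right _ _)
    · rw [he]
      exact le_trans (by linarith [hμ.1, neg_abs_le (m₁ - c)] : -(μ - c) ≤ |m₁ - c|)
        (le_max_left _ _)
  rw [hz]
  split_ifs with hcase
  · rw [max_eq_left hcase] at key; exact key
  · rw [max_eq_right (le_of_not_ge hcase)] at key; exact key

lemma h_sigma_min (a b μ σ₁ σ₂ : ℝ) (hab : a ≤ b) (h1 : 0 < σ₁) {σ : ℝ}
    (hσ : σ ∈ Icc σ₁ σ₂) :
    min (h a b μ σ₁) (h a b μ σ₂) ≤ h a b μ σ := by
  have hπ : 0 < Real.sqrt Real.pi := Real.sqrt_pos.2 Real.pi_pos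
  set D : ℝ → ℝ := fun τ => (a-μ) * Real.exp (-((a-μ)^2) * (1/(2*τ)))
      - (b-μ) * Real.exp (-((b-μ)^2) * (1/(2*τ))) with hD
  set K : ℝ → ℝ := fun τ => 1 / (Real.sqrt Real.pi * (2*τ) * Real.sqrt (2*τ)) with hK
  by_cases hall : ∀ τ ∈ Icc σ₁ σ, 0 ≤ D τ
  · refine le_trans (min_le_left _ _) ?_
    apply le_of_hasDerivAt_nonneg (f' := fun τ => K τ * D τ)
      (fun τ hτ => h_hasDerivAt_sigma a b μ (lt_of_lt_of_le h1 hτ.1)) hσ.1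
    intro t ht
    have htpos : 0 < t := lt_of_lt_of_le h1 ht.1
    exact mul_nonneg (by positivity) (hall t ht)
  · push_neg at hall
    obtain ⟨τ, hτmem, hτneg⟩ := hall
    refine le_trans (min_le_right _ _) ?_
    apply le_of_hasDerivAt_nonpos (f' := fun τ => K τ * D τ)
      (fun t ht => h_hasDerivAt_sigma a b μ (lt_of_lt_of_le h1 (le_trans hσ.1 ht.1))) hσ.2
    intro t ht
    have hτpos : 0 < τ := lt_of_lt_of_le h1 hτmem.1
    have htpos : 0 < t := lt_of_lt_of_le h1 (le_trans hσ.1 ht.1)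
    have hτt : τ ≤ t := le_trans hτmem.2 ht.1
    have hDt : D t ≤ 0 := by
      have hord : 1/(2*t) ≤ 1/(2*τ) :=
        one_div_le_one_div_of_le (by linarith) (by linarith)
      have hsc := single_cross (A := a - μ) (B := b - μ) (u := 1/(2*τ)) (u' := 1/(2*t))
        (by linarith) (by positivity) hord
        (by simp only [hD] at hτneg; linarith)
      simp only [hD]
      linarith
    exact mul_nonpos_of_nonneg_of_nonpos (by positivity) hDt

theorem stmt12 (a b m₁ m₂ σ₁ σ₂ c zbar : ℝ) (hab : a ≤ b) (hm : m₁ ≤ m₂)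
    (h1 : 0 < σ₁) (h12 : σ₁ ≤ σ₂) (hc : c = (a + b) / 2)
    (hz : zbar = if |m₂ - c| ≤ |m₁ - c| then m₁ else m₂) :
    ∀ μ ∈ Set.Icc m₁ m₂, ∀ σ ∈ Set.Icc σ₁ σ₂,
      min (h a b zbar σ₁) (h a b zbar σ₂) ≤ h a b μ σ := by
  intro μ hμ σ hσ
  have hσpos : 0 < σ := lt_of_lt_of_le h1 hσ.1
  have step2 : min (h a b zbar σ₁) (h a b zbar σ₂) ≤ h a b zbar σ :=
    h_sigma_min a b zbar σ₁ σ₂ hab h1 hσ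
  have step1 : h a b zbar σ ≤ h a b μ σ :=
    h_le_of_dist_le a b c σ hab hc hσpos (dist_le_zbar m₁ m₂ c zbar hz hμ)
  linarith
end
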